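/- The free extension functor from supported permutation sets to supported renaming sets, sending X to the quotient of ℝ × X by the least equivalence relation ∼ with (ρ,x) ∼ (ρ',x) when ρ and ρ' agree on supp(x), and (ρ∘π, x) ∼ (ρ, π·x), with action ρ·[(ρ',x)] = [(ρ∘ρ',x)], is a well-defined functor: in particular, for an equivariant F : X → Y, the map [(ρ,x)] ↦ [(ρ,F(x))] is well-defined. -/
import Mathlib


abbrev Atom := ℕ

def FinPermGroup : Subgroup (Equiv.Perm Atom) where
  carrier := {π | {a | π a ≠ a}.Finite}
  one_mem' := by simp
  mul_mem' := by
    intro π π' hπ hπ'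
    refine Set.Finite.subset (Set.Finite.union hπ hπ') fun a ha => ?_
    by_contra h
    simp only [Set.mem_union, Set.mem_setOf_eq, not_or, not_not] at h
    exact ha (show π (π' a) = a by rw [h.2, h.1])
  inv_mem' := by
    intro π hπ
    have h : {a | π⁻¹ a ≠ a} = {a | π a ≠ a} := by
      ext a
      simp only [Set.mem_setOf_eq, ne_eq, not_iff_not]
      rw [Equiv.Perm.inv_eq_iff_eq, eq_comm]
    show {a | π⁻¹ a ≠ a}.Finite
    rw [h]; exact hπ

abbrev FinPerm : Type := FinPermGroup

def PSupports {X : Type*} [MulAction FinPerm X] (A : Set Atom) (x : X) : Prop :=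
  ∀ π π' : FinPerm, (∀ a ∈ A, π.1 a = π'.1 a) → π • x = π' • x

def PIsLeastSupport {X : Type*} [MulAction FinPerm X] (S : Set Atom) (x : X) : Prop :=
  PSupports S x ∧ ∀ A, PSupports A x → S ⊆ A

def IsPermissionSet (S : Set Atom) : Prop :=
  ∃ A B : Finset Atom, (↑A : Set Atom) ⊆ {n | n % 2 = 1} ∧ (↑B : Set Atom) ⊆ {n | n % 2 = 0} ∧
    S = ({n : Atom | n % 2 = 0} ∪ ↑A) \ ↑B

def swapPerm (a b : Atom) : FinPerm :=
  ⟨Equiv.swap a b, by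
    show {c | Equiv.swap a b c ≠ c}.Finite
    apply Set.Finite.subset ((Set.finite_singleton b).insert a)
    intro c hc
    by_contra hn
    simp only [Set.mem_insert_iff, Set.mem_singleton_iff, not_or] at hn
    exact hc (Equiv.swap_apply_of_ne_of_ne hn.1 hn.2)⟩

instance : SMul FinPerm Atom := ⟨fun π a => π.1 a⟩
instance : MulAction FinPerm Atom where
  one_smul _ := rfl
  mul_smul _ _ _ := rfl

def RenMonoid : Submonoid (Function.End Atom) where
  carrier := {ρ | {a | ρ a ≠ a}.Finite}
  one_mem' := Set.Finite.subset Set.finite_empty (fun _ ha => (ha rfl).elim)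
  mul_mem' := by
    intro ρ ρ' hρ hρ'
    refine Set.Finite.subset (Set.Finite.union hρ hρ') fun a ha => ?_
    by_contra h
    simp only [Set.mem_union, Set.mem_setOf_eq, not_or, not_not] at h
    exact ha (show ρ (ρ' a) = a by rw [h.2, h.1])

abbrev Ren : Type := RenMonoid

def rdom (ρ : Ren) : Set Atom := {a | ρ.1 a ≠ a}
def rimg (ρ : Ren) : Set Atom := ρ.1 '' rdom ρ
def rnontriv (ρ : Ren) : Set Atom := rdom ρ ∪ rimg ρ

def RSupports {X : Type*} [MulAction Ren X] (A : Set Atom) (x : X) : Prop :=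
  ∀ ρ ρ' : Ren, (∀ a ∈ A, ρ.1 a = ρ'.1 a) → ρ • x = ρ' • x

def RIsLeastSupport {X : Type*} [MulAction Ren X] (S : Set Atom) (x : X) : Prop :=
  RSupports S x ∧ ∀ A, RSupports A x → S ⊆ A

def atomRen (a b : Atom) : Ren :=
  ⟨fun c => if c = a then b else c, by
    show {c | (if c = a then b else c) ≠ c}.Finite
    apply Set.Finite.subset (Set.finite_singleton a)
    intro c hc
    by_contra hn
    simp only [Set.mem_singleton_iff] at hn
    exact hc (by simp [if_neg hn])⟩

def FunSupportedBy {X Y : Type*} [MulAction Ren X] [MulAction Ren Y]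
    (S : Set Atom) (f : X → Y) : Prop :=
  ∀ (ρ : Ren) (x : X), rdom ρ ∩ S = ∅ → ρ • f x = f (ρ • x)

def FreshPair (ρ₁ ρ₂ : Ren) (A S : Set Atom) : Prop :=
  rdom ρ₁ = A ∧ rdom ρ₂ = rimg ρ₁ ∧ (∀ a ∈ A, ρ₂.1 (ρ₁.1 a) = a) ∧
    rdom ρ₂ ∩ (S ∪ A) = ∅

instance : SMul Ren Atom := ⟨fun ρ a => ρ.1 a⟩
instance : MulAction Ren Atom where
  one_smul _ := rfl
  mul_smul _ _ _ := rfl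

/-- Every finitely-supported permutation is in particular a renaming. -/
def permToRen (π : FinPerm) : Ren :=
  ⟨(π.1 : Atom → Atom), by
    show {a | π.1 a ≠ a}.Finite
    exact π.2⟩

/-- The generating relation for the free extension `Ren(X)` of a permutation set `X`
to a renaming set: the quotient of `Ren × X` by the least equivalence relation generated
by this relation is `Ren(X)`. -/
def FreeRel {X : Type*} [MulAction FinPerm X] (supp : X → Set Atom) :
    (Ren × X) → (Ren × X) → Prop :=
  fun p q =>
    (p.2 = q.2 ∧ ∀ a ∈ supp p.2, p.1.1 a = q.1.1 a) ∨
    (∃ (ρ : Ren) (π : FinPerm) (x : X), p = (ρ * permToRen π, x) ∧ q = (ρ, π • x))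

private lemma eqvGen_map {A B : Type*} {r : A → A → Prop} {s : B → B → Prop}
    (f : A → B) (h : ∀ p q, r p q → s (f p) (f q)) :
    ∀ p q, Relation.EqvGen r p q → Relation.EqvGen s (f p) (f q) := by
  intro p q hpq
  induction hpq with
  | rel a b hab => exact Relation.EqvGen.rel _ _ (h a b hab)
  | refl a => exact Relation.EqvGen.refl _
  | symm a b _ ih => exact Relation.EqvGen.symm _ _ ih
  | trans a b c _ _ ih1 ih2 => exact Relation.EqvGen.trans _ _ _ ih1 ih2

theorem stmt14 {X Y : Type*} [MulAction FinPerm X] [MulAction FinPerm Y]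
    (suppX : X → Set Atom) (suppY : Y → Set Atom)
    (hX : ∀ x, PIsLeastSupport (suppX x) x) (hY : ∀ y, PIsLeastSupport (suppY y) y)
    (F : X → Y) (hF : ∀ (π : FinPerm) (x : X), F (π • x) = π • F x) :
    (∀ (ρ : Ren) (p q : Ren × X), Relation.EqvGen (FreeRel suppX) p q →
        Relation.EqvGen (FreeRel suppX) (ρ * p.1, p.2) (ρ * q.1, q.2)) ∧
    (∀ p q : Ren × X, Relation.EqvGen (FreeRel suppX) p q →
        Relation.EqvGen (FreeRel suppY) (p.1, F p.2) (q.1, F q.2)) := by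

  constructor
  · intro ρ p q hpq
    refine eqvGen_map (fun p => (ρ * p.1, p.2)) ?_ p q hpq
    rintro a b (⟨h1, h2⟩ | ⟨ρ', π, x, ha, hb⟩)
    · exact Or.inl ⟨h1, fun c hc => congrArg ρ.1 (h2 c hc)⟩
    · refine Or.inr ⟨ρ * ρ', π, x, ?_, ?_⟩
      · rw [ha]; simp [mul_assoc]
      · rw [hb]
  · intro p q hpq
    refine eqvGen_map (fun p => (p.1, F p.2)) ?_ p q hpq
    rintro a b (⟨h1, h2⟩ | ⟨ρ', π, x, ha, hb⟩)
    · refine Or.inl ⟨by simp only []; rw [h1], fun c hc => h2 c ?_⟩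
      have hsupp : PSupports (suppX a.2) (F a.2) := by
        intro π π' hππ'
        rw [← hF, ← hF, (hX a.2).1 π π' hππ']
      exact (hY (F a.2)).2 _ hsupp hc
    · exact Or.inr ⟨ρ', π, F x, by rw [ha], by rw [hb]; simp [hF]⟩
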